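/- For M = 2, h(a, b) = E[max(a₁ + b₁Z, a₂ + b₂Z)] − max(a₁, a₂) satisfies the closed form: if b₁ ≠ b₂ and a₂ ≥ a₁ (WLOG), then h(a,b) = |b₂ − b₁| f(−|a₂ − a₁|/|b₂ − b₁|), where f(z) = z Φ(z) + φ(z), with Φ and φ the standard normal CDF and density. -/

import Mathlib

open MeasureTheory ProbabilityTheory Real Set Filter

/-- The standard normal density `φ(z) = exp(−z²/2)/√(2π)`. -/
noncomputable def stdNormalPDF (z : ℝ) : ℝ :=
  Real.exp (-z ^ 2 / 2) / Real.sqrt (2 * Real.pi)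

/-- The standard normal CDF `Φ(z) = ∫_{−∞}^z φ(t) dt`. -/
noncomputable def stdNormalCDF (z : ℝ) : ℝ :=
  ∫ t in Set.Iic z, stdNormalPDF t

/-- The standard normal loss function `f(z) = zΦ(z) + φ(z)`. -/
noncomputable def normalLoss (z : ℝ) : ℝ :=
  z * stdNormalCDF z + stdNormalPDF z

/-- The knowledge-gradient function `h(a,b) = E[max_i (aᵢ + bᵢ Z)] − max_i aᵢ`
with `Z ~ N(0,1)`. -/
noncomputable def kgH {M : ℕ} (a b : Fin M → ℝ) : ℝ :=
  (∫ z, (⨆ i, (a i + b i * z)) ∂(gaussianReal 0 1)) - ⨆ i, a i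

lemma stdNormalPDF_eq (z : ℝ) : gaussianPDFReal 0 1 z = stdNormalPDF z := by
  simp [gaussianPDFReal, stdNormalPDF, div_eq_inv_mul, mul_comm]

lemma stdNormalPDF_nonneg (z : ℝ) : 0 ≤ stdNormalPDF z := by
  unfold stdNormalPDF; positivity

lemma continuous_stdNormalPDF : Continuous stdNormalPDF := by
  unfold stdNormalPDF
  fun_prop

lemma integrable_stdNormalPDF : Integrable stdNormalPDF := by
  have := integrable_gaussianPDFReal 0 1
  simpa [funext stdNormalPDF_eq] using this

lemma integral_stdNormalPDF : ∫ z, stdNormalPDF z = 1 := by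
  have := integral_gaussianPDFReal_eq_one 0 (one_ne_zero)
  simpa [funext stdNormalPDF_eq] using this

lemma integrable_mul_stdNormalPDF : Integrable (fun z => z * stdNormalPDF z) := by
  have h := (integrable_mul_exp_neg_mul_sq (b := (1/2 : ℝ)) (by norm_num)).mul_const
    (Real.sqrt (2 * Real.pi))⁻¹
  have : (fun z : ℝ => z * Real.exp (-(1/2) * z ^ 2) * (Real.sqrt (2 * Real.pi))⁻¹)
      = fun z => z * stdNormalPDF z := by
    funext z
    rw [stdNormalPDF, div_eq_mul_inv, show -z^2/2 = -(1/2)*z^2 by ring]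
    ring
  rwa [this] at h

lemma integral_Ioi_stdNormalPDF (s : ℝ) :
    ∫ z in Ioi s, stdNormalPDF z = 1 - stdNormalCDF s := by
  have h := intervalIntegral.integral_Iic_add_Ioi (μ := volume) (b := s)
    integrable_stdNormalPDF.integrableOn integrable_stdNormalPDF.integrableOn
  rw [integral_stdNormalPDF] at h
  rw [stdNormalCDF]; linarith

lemma stdNormalPDF_neg (z : ℝ) : stdNormalPDF (-z) = stdNormalPDF z := by
  simp [stdNormalPDF]

lemma stdNormalCDF_neg (s : ℝ) : stdNormalCDF (-s) = 1 - stdNormalCDF s := by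
  calc stdNormalCDF (-s) = ∫ t in Iic (-s), stdNormalPDF (-t) :=
        setIntegral_congr_fun measurableSet_Iic fun t _ => (stdNormalPDF_neg t).symm
    _ = ∫ t in Ioi s, stdNormalPDF t := by rw [integral_comp_neg_Iic]; norm_num
    _ = 1 - stdNormalCDF s := integral_Ioi_stdNormalPDF s

lemma hasDerivAt_neg_pdf (x : ℝ) :
    HasDerivAt (fun z => -stdNormalPDF z) (x * stdNormalPDF x) x := by
  have h1 : HasDerivAt (fun z : ℝ => -z ^ 2 / 2) (-x) x := by
    have := ((hasDerivAt_pow 2 x).neg).div_const 2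
    refine this.congr_deriv ?_
    norm_num; ring
  have h2 := (h1.exp.div_const (Real.sqrt (2 * Real.pi))).neg
  refine h2.congr_deriv ?_
  rw [stdNormalPDF]; ring

lemma integral_Ioi_mul_stdNormalPDF (s : ℝ) :
    ∫ z in Ioi s, z * stdNormalPDF z = stdNormalPDF s := by
  have h := integral_Ioi_of_hasDerivAt_of_tendsto' (f := fun z => -stdNormalPDF z)
    (f' := fun z => z * stdNormalPDF z) (a := s) (m := 0)
    (fun x _ => hasDerivAt_neg_pdf x)
    integrable_mul_stdNormalPDF.integrableOn ?_
  · rw [h]; simp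
  · have : Tendsto stdNormalPDF atTop (nhds 0) := by
      rw [show (0:ℝ) = 0 / Real.sqrt (2 * Real.pi) by simp]
      apply Tendsto.div_const
      apply Real.tendsto_exp_atBot.comp
      apply Filter.Tendsto.atBot_div_const (by norm_num)
      exact tendsto_neg_atBot_iff.mpr (tendsto_pow_atTop (by norm_num))
    simpa using this.neg

lemma integral_mul_stdNormalPDF_eq_zero : ∫ z, z * stdNormalPDF z = 0 := by
  have h := integral_neg_eq_self (fun z : ℝ => z * stdNormalPDF z) volume
  simp only [stdNormalPDF_neg, neg_mul, integral_neg] at h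
  linarith

lemma core_pos (c d : ℝ) (hd : 0 < d) :
    ∫ z, stdNormalPDF z * max (c + d * z) 0 = d * normalLoss (c / d) := by
  set s := -(c / d) with hs
  have hds : d * s = -c := by rw [hs]; field_simp
  have hind : (fun z => stdNormalPDF z * max (c + d * z) 0)
      = Set.indicator (Ici s) (fun z => stdNormalPDF z * (c + d * z)) := by
    funext z
    by_cases hz : s ≤ z
    · rw [Set.indicator_of_mem (Set.mem_Ici.mpr hz)]
      have hpos : 0 ≤ c + d * z := by nlinarith [mul_le_mul_of_nonneg_left hz hd.le]
      rw [max_eq_left hpos]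
    · rw [Set.indicator_of_notMem (by simpa using hz)]
      push_neg at hz
      have hneg : c + d * z ≤ 0 := by nlinarith [mul_le_mul_of_nonneg_left hz.le hd.le]
      rw [max_eq_right hneg, mul_zero]
  rw [hind, integral_indicator measurableSet_Ici, integral_Ici_eq_integral_Ioi]
  have h1 : IntegrableOn (fun z => c * stdNormalPDF z) (Ioi s) :=
    (integrable_stdNormalPDF.const_mul c).integrableOn
  have h2 : IntegrableOn (fun z => d * (z * stdNormalPDF z)) (Ioi s) :=
    (integrable_mul_stdNormalPDF.const_mul d).integrableOn
  rw [setIntegral_congr_fun measurableSet_Ioi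
      (fun z _ => show stdNormalPDF z * (c + d * z)
        = c * stdNormalPDF z + d * (z * stdNormalPDF z) by ring),
    integral_add h1 h2, integral_const_mul, integral_const_mul,
    integral_Ioi_stdNormalPDF, integral_Ioi_mul_stdNormalPDF]
  rw [normalLoss, hs, stdNormalCDF_neg, stdNormalPDF_neg]
  field_simp
  ring

lemma core (c d : ℝ) (hd : d ≠ 0) :
    ∫ z, stdNormalPDF z * max (c + d * z) 0 = |d| * normalLoss (c / |d|) := by
  rcases lt_or_gt_of_ne hd with h | h
  · have hneg : ∫ z, stdNormalPDF z * max (c + d * z) 0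
        = ∫ z, stdNormalPDF z * max (c + (-d) * z) 0 := by
      rw [← integral_neg_eq_self (fun z => stdNormalPDF z * max (c + (-d) * z) 0) volume]
      congr 1; funext z
      rw [stdNormalPDF_neg]; ring_nf
    rw [hneg, core_pos c (-d) (by linarith), abs_of_neg h]
  · rw [core_pos c d h, abs_of_pos h]

lemma integral_gaussianReal_eq (g : ℝ → ℝ) :
    ∫ z, g z ∂(gaussianReal 0 1) = ∫ z, stdNormalPDF z * g z := by
  rw [gaussianReal_of_var_ne_zero 0 one_ne_zero]
  have hmeas : Measurable fun x => (gaussianPDFReal 0 1 x).toNNReal :=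
    (measurable_gaussianPDFReal 0 1).real_toNNReal
  have hdef : gaussianPDF 0 1 = fun x => ((gaussianPDFReal 0 1 x).toNNReal : ENNReal) := rfl
  rw [hdef, integral_withDensity_eq_integral_smul hmeas]
  congr 1; funext z
  rw [NNReal.smul_def, smul_eq_mul, Real.coe_toNNReal _ (gaussianPDFReal_nonneg 0 1 z),
    stdNormalPDF_eq]

lemma iSup_fin2 (g : Fin 2 → ℝ) : (⨆ i, g i) = max (g 0) (g 1) := by
  apply le_antisymm
  · exact ciSup_le fun i => by fin_cases i <;> [exact le_max_left _ _; exact le_max_right _ _]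
  · exact max_le (le_ciSup (Set.finite_range g).bddAbove 0)
      (le_ciSup (Set.finite_range g).bddAbove 1)

lemma max_decomp (x y : ℝ) : max x y = y + max (x - y) 0 := by
  rcases le_total x y with h | h
  · rw [max_eq_right h, max_eq_right (by linarith)]; ring
  · rw [max_eq_left h, max_eq_left (by linarith)]; ring

/-- Closed form of the knowledge gradient for two alternatives: if `b₁ ≠ b₂`
and `a₁ ≤ a₂`, then `h(a,b) = |b₂ − b₁| · f(−|a₂ − a₁|/|b₂ − b₁|)` where
`f(z) = zΦ(z) + φ(z)` is the standard normal loss function. -/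
theorem kgH_two_alternatives_closed_form (a b : Fin 2 → ℝ)
    (hb : b 0 ≠ b 1) (ha : a 0 ≤ a 1) :
    kgH a b = |b 1 - b 0| * normalLoss (-|a 1 - a 0| / |b 1 - b 0|) := by
  have hd : b 0 - b 1 ≠ 0 := sub_ne_zero.mpr hb
  have hmax : ∀ z : ℝ, (⨆ i, (a i + b i * z))
      = (a 1 + b 1 * z) + max ((a 0 - a 1) + (b 0 - b 1) * z) 0 := by
    intro z
    rw [iSup_fin2 (fun i => a i + b i * z), max_decomp]
    congr 2
    ring
  have hsup : (⨆ i, a i) = a 1 := by rw [iSup_fin2 a, max_eq_right ha]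
  have i1 : Integrable (fun z => a 1 * stdNormalPDF z) := integrable_stdNormalPDF.const_mul _
  have i2 : Integrable (fun z => b 1 * (z * stdNormalPDF z)) :=
    integrable_mul_stdNormalPDF.const_mul _
  have i3 : Integrable
      (fun z => stdNormalPDF z * max ((a 0 - a 1) + (b 0 - b 1) * z) 0) := by
    set c := a 0 - a 1; set d := b 0 - b 1
    apply Integrable.mono'
      ((integrable_stdNormalPDF.const_mul |c|).add (integrable_mul_stdNormalPDF.abs.const_mul |d|))
    · exact (continuous_stdNormalPDF.mul ((continuous_const.add
        (continuous_const.mul continuous_id)).max continuous_const)).aestronglyMeasurable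
    · filter_upwards with z
      have h1 : |max (c + d * z) 0| ≤ |c| + |d| * |z| := by
        rw [abs_of_nonneg (le_max_right _ _)]
        calc max (c + d * z) 0 ≤ |c + d * z| := max_le (le_abs_self _) (abs_nonneg _)
          _ ≤ |c| + |d| * |z| := by rw [← abs_mul]; exact abs_add_le _ _
      calc ‖stdNormalPDF z * max (c + d * z) 0‖
          = stdNormalPDF z * |max (c + d * z) 0| := by
            rw [norm_eq_abs, abs_mul, abs_of_nonneg (stdNormalPDF_nonneg z)]
        _ ≤ stdNormalPDF z * (|c| + |d| * |z|) :=
            mul_le_mul_of_nonneg_left h1 (stdNormalPDF_nonneg z)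
        _ = |c| * stdNormalPDF z + |d| * |z * stdNormalPDF z| := by
            rw [abs_mul, abs_of_nonneg (stdNormalPDF_nonneg z)]; ring
  rw [kgH]
  simp only [hmax, hsup]
  rw [integral_gaussianReal_eq]
  have hsplit : (fun z => stdNormalPDF z * ((a 1 + b 1 * z)
        + max ((a 0 - a 1) + (b 0 - b 1) * z) 0))
      = fun z => (a 1 * stdNormalPDF z + b 1 * (z * stdNormalPDF z))
        + stdNormalPDF z * max ((a 0 - a 1) + (b 0 - b 1) * z) 0 := by
    funext z; ring
  have h12 : ∫ z, (a 1 * stdNormalPDF z + b 1 * (z * stdNormalPDF z)) = a 1 := by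
    rw [integral_add i1 i2, integral_const_mul, integral_const_mul, integral_stdNormalPDF,
      integral_mul_stdNormalPDF_eq_zero]
    ring
  have i12 : Integrable (fun z => a 1 * stdNormalPDF z + b 1 * (z * stdNormalPDF z)) :=
    i1.add i2
  rw [hsplit, integral_add i12 i3, h12, core (a 0 - a 1) (b 0 - b 1) hd]
  have e1 : |b 1 - b 0| = |b 0 - b 1| := abs_sub_comm _ _
  have e2 : -|a 1 - a 0| = a 0 - a 1 := by rw [abs_of_nonneg (by linarith)]; ring
  rw [e1, e2]
  ring
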